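/- Let A be a symmetric endomorphism of an n-dimensional real inner product space with eigenvalues λ₁,…,λ_n, and let e_j be a unit eigenvector with eigenvalue λ_j. Then ∑_{i=0}^{n/2-1} σ_i(A)·(-λ_j)^{n/2-i-1} = σ_{n/2-1}(A restricted to the orthogonal complement of e_j), where σ_k denotes the k-th elementary symmetric function of the eigenvalues. -/

import Mathlib

open scoped RealInnerProductSpace

lemma esymm_cons_aux {R : Type*} [CommSemiring R] (a : R) (s : Multiset R) (k : ℕ) :
    (a ::ₘ s).esymm (k + 1) = s.esymm (k + 1) + a * s.esymm k := by
  simp only [Multiset.esymm, Multiset.powersetCard_cons, Multiset.map_add, Multiset.sum_add,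
    Multiset.map_map, Function.comp_def, Multiset.prod_cons]
  rw [← Multiset.sum_map_mul_left]

lemma telescope_aux (a : ℝ) (T : Multiset ℝ) (m : ℕ) (hm : 0 < m) :
    ∑ i ∈ Finset.range m, (a ::ₘ T).esymm i * (-a) ^ (m - i - 1) = T.esymm (m - 1) := by
  induction m with
  | zero => exact absurd hm (lt_irrefl 0)
  | succ m ih =>
    rcases Nat.eq_zero_or_pos m with hm0 | hm0
    · subst hm0; simp [Multiset.esymm]
    · rw [Finset.sum_range_succ]
      have key : ∀ i ∈ Finset.range m,
          (a ::ₘ T).esymm i * (-a) ^ (m + 1 - i - 1)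
            = (-a) * ((a ::ₘ T).esymm i * (-a) ^ (m - i - 1)) := by
        intro i hi
        have hi' : i < m := Finset.mem_range.mp hi
        have : m + 1 - i - 1 = (m - i - 1) + 1 := by omega
        rw [this, pow_succ]; ring
      rw [Finset.sum_congr rfl key, ← Finset.mul_sum, ih hm0]
      have hm1 : m - 1 + 1 = m := Nat.succ_pred_eq_of_pos hm0
      have h0 : m + 1 - m - 1 = 0 := by omega
      have : (a ::ₘ T).esymm m = T.esymm m + a * T.esymm (m - 1) := by
        rw [← hm1, esymm_cons_aux, hm1]
      rw [h0, pow_zero, mul_one, this, Nat.add_sub_cancel]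
      ring

/-- Let `A` be a symmetric endomorphism of an `n`-dimensional real inner product space (`n` even)
with eigenvalues `lam 1, …, lam n` given by an orthonormal eigenbasis `e`, and let `e j` be a unit
eigenvector with eigenvalue `lam j`.  Then
`∑_{i=0}^{n/2-1} σ_i(A)·(-lam j)^(n/2-i-1) = σ_{n/2-1}(A restricted to (e j)ᗮ)`,
where `σ_k` is the `k`-th elementary symmetric function of the eigenvalues; the restriction of `A`
to the orthogonal complement of `e j` has eigenvalues `{lam i : i ≠ j}`. -/
theorem esymm_newton_transform_eigenvalue
    {V : Type*} [NormedAddCommGroup V] [InnerProductSpace ℝ V]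
    (n : ℕ) (hn : Even n) (hpos : 0 < n)
    (A : V →ₗ[ℝ] V) (hA : LinearMap.IsSymmetric A)
    (e : OrthonormalBasis (Fin n) ℝ V) (lam : Fin n → ℝ)
    (heig : ∀ i, A (e i) = lam i • e i) (j : Fin n) :
    ∑ i ∈ Finset.range (n / 2),
        Multiset.esymm (Finset.univ.val.map lam) i * (-lam j) ^ (n / 2 - i - 1)
      = Multiset.esymm (((Finset.univ.erase j).val).map lam) (n / 2 - 1) := by
  have hsplit : Finset.univ.val.map lam
      = lam j ::ₘ ((Finset.univ.erase j).val.map lam) := by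
    rw [Finset.erase_val, ← Multiset.map_cons,
      Multiset.cons_erase (Finset.mem_univ j : j ∈ Finset.univ)]
  have hm : 0 < n / 2 := by
    obtain ⟨k, rfl⟩ := hn; omega
  rw [hsplit]
  exact telescope_aux (lam j) _ (n / 2) hm
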